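/- Let H be a complex Hilbert space, A : H → H a bounded self-adjoint operator, and c : H → H a bounded operator with c* = -c and c ∘ c = -I such that A ∘ c = -c ∘ A. Let |A| := √(A²) (continuous functional calculus). Let l ∈ ℝ, ε > 0, f : (0,ε) → ℝ continuous, and let φ : (0,ε) → H be differentiable with φ'(x) + A(φ(x)) = -l·f(x)·c(φ(x)) for all x ∈ (0,ε). Then the function F(x) := ‖exp(-x|A|)(φ(x))‖² is non-increasing on (0,ε). -/

import Mathlib

open MeasureTheory Set Filter
set_option synthInstance.maxHeartbeats 1000000
set_option maxHeartbeats 1000000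

open Polynomial in
/-- If `b` commutes with a self-adjoint operator `a`, then `b` commutes with `cfc g a`. -/
lemma commute_cfc_aux {H : Type*} [NormedAddCommGroup H] [InnerProductSpace ℂ H]
    [CompleteSpace H] (a b : H →L[ℂ] H) (hab : Commute b a)
    (g : ℝ → ℝ) : Commute b (cfc g a) := by
  refine cfc_cases (fun x => Commute b x) a g (Commute.zero_right b) fun hg ha' => ?_
  have key : ∀ f : C(spectrum ℝ a, ℝ), Commute b (cfcHom ha' f) := by
    intro f
    let T : Subalgebra ℝ (H →L[ℂ] H) := Subalgebra.centralizer ℝ {b}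
    let T' : Subalgebra ℝ C(spectrum ℝ a, ℝ) := T.comap (cfcHom ha' (R := ℝ)).toAlgHom
    have hT'closed : IsClosed (T' : Set C(spectrum ℝ a, ℝ)) := by
      have : IsClosed (T : Set (H →L[ℂ] H)) := by
        have : (T : Set (H →L[ℂ] H)) = ⋂ m ∈ ({b} : Set (H →L[ℂ] H)), {x | m * x = x * m} := by
          ext x; simp [T, Subalgebra.mem_centralizer_iff, Set.mem_centralizer_iff, eq_comm]
        rw [this]
        exact isClosed_biInter fun m _ =>
          isClosed_eq (continuous_mul_left m) (continuous_mul_right m)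
      exact this.preimage (cfcHom_isClosedEmbedding ha').continuous
    have hX : (polynomialFunctions (spectrum ℝ a)) ≤ T' := by
      rw [polynomialFunctions.eq_adjoin_X]
      rw [Algebra.adjoin_le_iff]
      rintro x rfl
      rw [SetLike.mem_coe, Subalgebra.mem_comap]
      have h0 : (toContinuousMapOnAlgHom (spectrum ℝ a) (X : ℝ[X])) =
          (ContinuousMap.id ℝ).restrict (spectrum ℝ a) := by ext z; simp
      have h1 : (cfcHom ha' (R := ℝ)).toAlgHom (toContinuousMapOnAlgHom (spectrum ℝ a) X) = a := by
        rw [h0]; simpa using cfcHom_id ha'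
      rw [h1, Subalgebra.mem_centralizer_iff]
      rintro m hm
      rw [Set.mem_singleton_iff] at hm
      subst hm
      exact hab
    have := (polynomialFunctions.topologicalClosure (spectrum ℝ a)) ▸
      Subalgebra.topologicalClosure_minimal hX hT'closed
    have hf : f ∈ T' := this (by trivial)
    have h2 := Subalgebra.mem_centralizer_iff ℝ |>.mp hf b rfl
    have hcomm : b * ((cfcHom ha') f) = ((cfcHom ha') f) * b := by simpa using h2
    exact hcomm
  exact key _

theorem exp_abs_norm_sq_antitone
    {H : Type*} [NormedAddCommGroup H] [InnerProductSpace ℂ H] [CompleteSpace H]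
    (A c : H →L[ℂ] H) (hA : IsSelfAdjoint A)
    (hc_skew : ContinuousLinearMap.adjoint c = -c)
    (hc_sq : c ∘L c = -ContinuousLinearMap.id ℂ H)
    (hAc : A ∘L c = -(c ∘L A))
    (l : ℝ) (ε : ℝ) (hε : 0 < ε)
    (f : ℝ → ℝ) (hf_cont : ContinuousOn f (Set.Ioo 0 ε))
    (φ : ℝ → H)
    (hφ_ode : ∀ x ∈ Set.Ioo 0 ε,
      HasDerivAt φ (-(A (φ x)) - ((l * f x : ℝ) : ℂ) • c (φ x)) x) :
    AntitoneOn
      (fun x : ℝ => ‖NormedSpace.exp (((-x : ℝ) : ℂ) • CFC.sqrt (A ^ 2)) (φ x)‖ ^ 2)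
      (Set.Ioo 0 ε) := by
  have hA2 : (0 : H →L[ℂ] H) ≤ A ^ 2 := by
    rw [pow_two]; nth_rewrite 1 [← hA.star_eq]; exact star_mul_self_nonneg A
  set B := CFC.sqrt (A ^ 2) with hBdef
  have hB_cfc : B = cfc Real.sqrt (A ^ 2) := by
    rw [hBdef, CFC.sqrt_eq_cfc, cfc_nnreal_eq_real _ _ hA2]
    exact cfc_congr fun t ht => by rw [Real.sqrt]
  have habs : B = cfc (fun t : ℝ => |t|) A := by
    rw [hB_cfc, ← cfc_pow_id (R := ℝ) A 2 hA,
      ← cfc_comp' Real.sqrt (· ^ 2) A (by fun_prop) (by fun_prop)]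
    exact cfc_congr fun t _ => Real.sqrt_sq_eq_abs t
  have hBA_nonneg : (0 : H →L[ℂ] H) ≤ B + A := by
    have h1 : cfc (fun t : ℝ => |t| + t) A = B + A := by
      rw [cfc_add A (fun t : ℝ => |t|) (fun t : ℝ => t) (by fun_prop) (by fun_prop),
        cfc_id' ℝ A hA, ← habs]
    rw [← h1]
    exact cfc_nonneg fun t _ => by linarith [neg_abs_le t]
  have hAB : Commute A B := by
    rw [habs]
    have := cfc_commute_cfc (id : ℝ → ℝ) (fun t : ℝ => |t|) A
    rwa [cfc_id ℝ A hA] at this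
  -- c commutes with B
  have hAc' : A * c = -(c * A) := hAc
  have h2 : c * A = -(A * c) := by rw [hAc', neg_neg]
  have hcA2 : Commute c (A ^ 2) := by
    show c * A ^ 2 = A ^ 2 * c
    rw [pow_two, ← mul_assoc, h2, neg_mul, mul_assoc, h2, mul_neg, neg_neg, ← mul_assoc]
  have hcB : Commute c B := by rw [hB_cfc]; exact commute_cfc_aux _ _ hcA2 _
  have hPB : Commute (B + A) B := (Commute.refl B).add_left hAB
  have hP_pos : (B + A).IsPositive :=
    (ContinuousLinearMap.nonneg_iff_isPositive _).mp hBA_nonneg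
  -- the key derivative computation
  have key : ∀ x ∈ Set.Ioo (0:ℝ) ε, ∃ d ≤ 0,
      HasDerivAt (fun x : ℝ => ‖NormedSpace.exp (((-x : ℝ) : ℂ) • B) (φ x)‖ ^ 2) d x := by
    intro x hx
    set μ : ℂ := ((l * f x : ℝ) : ℂ) with hμ
    set E : H →L[ℂ] H := NormedSpace.exp (((-x : ℝ) : ℂ) • B) with hE
    set u : H := φ x with hu
    set v : H := E u with hv
    set ψd : H := ((-1 : ℂ) • (E * B)) u + E (-(A u) - μ • c u) with hψd
    -- derivative of ψ
    have hφ' : HasDerivAt φ (-(A u) - μ • c u) x := hφ_ode x hx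
    have hψ : HasDerivAt (fun y : ℝ => NormedSpace.exp (((-y : ℝ) : ℂ) • B) (φ y)) ψd x := by
      have hf1 : HasDerivAt (fun y : ℝ => ((-y : ℝ) : ℂ)) (-1 : ℂ) x := by
        have h := Complex.ofRealCLM.hasFDerivAt.comp_hasDerivAt x (hasDerivAt_neg x)
        simp only [Function.comp_def] at h
        simpa using h
      have hg := hasDerivAt_exp_smul_const (𝕂 := ℂ) B (((-x : ℝ) : ℂ))
      have hEd : HasDerivAt (fun y : ℝ => NormedSpace.exp (((-y : ℝ) : ℂ) • B))
          ((-1 : ℂ) • (NormedSpace.exp (((-x : ℝ) : ℂ) • B) * B)) x := by have := hg.scomp x hf1; exact this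
      let R : (H →L[ℂ] H) →L[ℝ] (H →L[ℝ] H) :=
        ContinuousLinearMap.restrictScalarsL ℂ H H ℝ ℝ
      have hRE : HasDerivAt (fun y : ℝ => R (NormedSpace.exp (((-y : ℝ) : ℂ) • B)))
          (R ((-1 : ℂ) • (NormedSpace.exp (((-x : ℝ) : ℂ) • B) * B))) x :=
        R.hasFDerivAt.comp_hasDerivAt x hEd
      exact hRE.clm_apply hφ'
    -- simplify ψd
    have hEP : E * (B + A) = (B + A) * E :=
      (((hPB.smul_right (((-x : ℝ) : ℂ))).exp_right).eq).symm
    have hEc : c * E = E * c := ((hcB.smul_right (((-x : ℝ) : ℂ))).exp_right).eq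
    have h3 : E (B u) + E (A u) = (B + A) v := by
      have h4 : E ((B + A) u) = (B + A) (E u) := by
        calc E ((B + A) u) = (E * (B + A)) u := rfl
          _ = ((B + A) * E) u := by rw [hEP]
          _ = (B + A) (E u) := rfl
      simpa [ContinuousLinearMap.add_apply, map_add] using h4
    have h5 : E (c u) = c v := by
      calc E (c u) = (E * c) u := rfl
        _ = (c * E) u := by rw [hEc]
        _ = c (E u) := rfl
    have hψd' : ψd = -((B + A) v) - μ • (c v) := by
      rw [hψd]
      have e1 : ((-1 : ℂ) • (E * B)) u = -(E (B u)) := by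
        simp [ContinuousLinearMap.smul_apply, ContinuousLinearMap.mul_apply]
      have e2 : E (-(A u) - μ • c u) = -(E (A u)) - μ • E (c u) := by
        simp [map_sub, map_neg, _root_.map_smul]
      rw [e1, e2, h5, ← h3]
      abel
    -- real part of ⟪v, c v⟫ vanishes
    have h7 : (RCLike.re (inner ℂ v (c v) : ℂ)) = 0 := by
      have ha := ContinuousLinearMap.adjoint_inner_left c v v
      rw [hc_skew] at ha
      have h9 : (inner ℂ v (c v) : ℂ) = -(inner ℂ (c v) v : ℂ) := by
        rw [← ha]; simp
      have h10 : RCLike.re (inner ℂ v (c v) : ℂ) = -RCLike.re (inner ℂ (c v) v : ℂ) := by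
        rw [h9, map_neg]
      have h11 := inner_re_symm (𝕜 := ℂ) v (c v)
      linarith
    have h8 : 0 ≤ RCLike.re (inner ℂ v ((B + A) v) : ℂ) := (RCLike.nonneg_iff.mp (hP_pos.inner_nonneg_right v)).1
    -- the derivative value
    refine ⟨Complex.reCLM ((inner ℂ v ψd : ℂ) + (inner ℂ ψd v : ℂ)), ?_, ?_⟩
    · have hconj : (inner ℂ ψd v : ℂ) = starRingEnd ℂ (inner ℂ v ψd : ℂ) := (inner_conj_symm ψd v).symm
      have hval : (inner ℂ v ψd : ℂ) = -(inner ℂ v ((B + A) v) : ℂ) - μ * (inner ℂ v (c v) : ℂ) := by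
        rw [hψd', inner_sub_right, inner_neg_right, inner_smul_right]
      have hre : (inner ℂ v ψd : ℂ).re = -(RCLike.re (inner ℂ v ((B + A) v) : ℂ))
          - (l * f x) * RCLike.re (inner ℂ v (c v) : ℂ) := by
        rw [hval]
        simp [hμ, Complex.sub_re, Complex.neg_re, Complex.mul_re, RCLike.re_to_complex]
      simp only [Complex.reCLM_apply, Complex.add_re, hconj, Complex.conj_re]
      rw [hre, h7]
      simp only [mul_zero, sub_zero]
      linarith
    · have hinner := HasDerivAt.inner (𝕜 := ℂ) hψ hψ
      have hcomp := Complex.reCLM.hasFDerivAt.comp_hasDerivAt x hinner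
      have hfun : (fun y : ℝ => ‖NormedSpace.exp (((-y : ℝ) : ℂ) • B) (φ y)‖ ^ 2)
          = (⇑Complex.reCLM ∘ fun y : ℝ =>
            (inner ℂ (NormedSpace.exp (((-y : ℝ) : ℂ) • B) (φ y))
              (NormedSpace.exp (((-y : ℝ) : ℂ) • B) (φ y)) : ℂ)) := by
        funext y
        simp only [Function.comp_apply, Complex.reCLM_apply]
        rw [← inner_self_eq_norm_sq (𝕜 := ℂ), RCLike.re_to_complex]
      rw [hfun]
      exact hcomp
  -- conclude
  have hConv : Convex ℝ (Set.Ioo (0:ℝ) ε) := convex_Ioo 0 ε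
  refine antitoneOn_of_deriv_nonpos hConv ?_ ?_ ?_
  · intro x hx
    obtain ⟨d, _, hd⟩ := key x hx
    exact hd.continuousAt.continuousWithinAt
  · rw [interior_Ioo]
    intro x hx
    obtain ⟨d, _, hd⟩ := key x hx
    exact hd.differentiableAt.differentiableWithinAt
  · rw [interior_Ioo]
    intro x hx
    obtain ⟨d, hd0, hd⟩ := key x hx
    rw [hd.deriv]
    exact hd0
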